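/- Let ω : ℕ → V be an infinite path (ω 0 = v₀ and ω (k+1) ∈ succ (ω k) for all k), and suppose there are real numbers m_k ≥ 1 with m_k = 1 for all but finitely many k, such that |a (ω k) (ω (k+1))| ≤ m_k / √2 for every k (as holds for the complex percolation process with percolation constant r = 1/2 + i/2, where m_k is the multiplicity of the k-th transition and |r| = |1−r| = 1/√2). Then lim_{n→∞} a_n(ω|_n) = 0, where ω|_n ∈ Ω_n is the restriction of ω to its first n entries. Consequently the singleton {ω} is beneficial with μ({ω}) = lim_{n→∞} μ_n({ω|_n}) = 0, and its complement satisfies lim_{n→∞} μ_n(Ω_n \ {ω|_n}) = 1. -/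

import Mathlib

variable {V : Type*} [Fintype V] [DecidableEq V]

/-- An `n`-path: `ω 0 = v₀` and each entry is a successor of the previous one. -/
def IsPath (v₀ : V) (succ : V → Finset V) (n : ℕ) (ω : Fin n → V) : Prop :=
  (∀ i : Fin n, (i : ℕ) = 0 → ω i = v₀) ∧
    ∀ i j : Fin n, (j : ℕ) = (i : ℕ) + 1 → ω j ∈ succ (ω i)

instance (v₀ : V) (succ : V → Finset V) (n : ℕ) :
    DecidablePred (IsPath v₀ succ n) := fun ω => by
  unfold IsPath; infer_instance

/-- `Ω_n`, the finite set of `n`-paths. -/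
def pathSet (v₀ : V) (succ : V → Finset V) (n : ℕ) : Finset (Fin n → V) :=
  Finset.univ.filter (IsPath v₀ succ n)

/-- The amplitude `a_n(ω) = ∏_{k=0}^{n-2} a (ω k) (ω (k+1))`. -/
noncomputable def amp (a : V → V → ℂ) (n : ℕ) (ω : Fin n → V) : ℂ :=
  ∏ k : Fin (n - 1),
    a (ω ⟨k.1, by have := k.2; omega⟩) (ω ⟨k.1 + 1, by have := k.2; omega⟩)

/-- The decoherence functional `D_n(A,B) = (∑_{ω ∈ A} a_n(ω)) ⬝ conj (∑_{ω' ∈ B} a_n(ω'))`. -/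
noncomputable def Dfun (a : V → V → ℂ) (n : ℕ) (A B : Finset (Fin n → V)) : ℂ :=
  (∑ ω ∈ A, amp a n ω) * (starRingEnd ℂ) (∑ ω ∈ B, amp a n ω)

/-- The `q`-measure `μ_n(A) = |∑_{ω ∈ A} a_n(ω)|²`. -/
noncomputable def qMeas (a : V → V → ℂ) (n : ℕ) (A : Finset (Fin n → V)) : ℝ :=
  Complex.normSq (∑ ω ∈ A, amp a n ω)

/-- The one-step extension `A→ = {ω ∈ Ω_{n+1} : ω|_{Fin n} ∈ A}`. -/
def ext (v₀ : V) (succ : V → Finset V) {n : ℕ} (A : Finset (Fin n → V)) :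
    Finset (Fin (n + 1) → V) :=
  (pathSet v₀ succ (n + 1)).filter (fun ω => (fun k : Fin n => ω k.castSucc) ∈ A)

/-- An infinite path: `ω 0 = v₀` and each entry is a successor of the previous. -/
def IsInfPath (v₀ : V) (succ : V → Finset V) (ω : ℕ → V) : Prop :=
  ω 0 = v₀ ∧ ∀ k : ℕ, ω (k + 1) ∈ succ (ω k)

set_option linter.unusedSectionVars false
set_option maxHeartbeats 1000000

lemma snoc_castSucc' {n : ℕ} (ρ : Fin (n+1) → V) (y : V) (k : Fin (n+1)) :
    (Fin.snoc ρ y : Fin (n+2) → V) k.castSucc = ρ k :=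
  Fin.snoc_castSucc (α := fun _ : Fin (n+2) => V) y ρ k

lemma snoc_last' {n : ℕ} (ρ : Fin (n+1) → V) (y : V) :
    (Fin.snoc ρ y : Fin (n+2) → V) (Fin.last (n+1)) = y :=
  Fin.snoc_last (α := fun _ : Fin (n+2) => V) y ρ

lemma snoc_mk_lt {n : ℕ} (ρ : Fin (n+1) → V) (y : V) {k : ℕ} (h : k < n+1) (h2 : k < n+2) :
    (Fin.snoc ρ y : Fin (n+2) → V) ⟨k, h2⟩ = ρ ⟨k, h⟩ := by
  rw [show (⟨k, h2⟩ : Fin (n+2)) = Fin.castSucc ⟨k, h⟩ from rfl, snoc_castSucc']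

lemma snoc_mk_last {n : ℕ} (ρ : Fin (n+1) → V) (y : V) (h2 : n+1 < n+2) :
    (Fin.snoc ρ y : Fin (n+2) → V) ⟨n+1, h2⟩ = y := by
  rw [show (⟨n+1, h2⟩ : Fin (n+2)) = Fin.last (n+1) from rfl, snoc_last']

lemma amp_succ (a : V → V → ℂ) {n : ℕ} (ω : Fin (n+2) → V) :
    amp a (n+2) ω =
      amp a (n+1) (fun k : Fin (n+1) => ω k.castSucc) *
        a (ω ⟨n, by omega⟩) (ω ⟨n+1, by omega⟩) := by
  show (∏ k : Fin (n+1), a (ω ⟨k.1, by have := k.2; omega⟩) (ω ⟨k.1+1, by have := k.2; omega⟩)) = _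
  rw [Fin.prod_univ_castSucc]
  rfl

lemma pathSet_one (v₀ : V) (succ : V → Finset V) :
    pathSet v₀ succ 1 = {fun _ => v₀} := by
  ext ω
  simp only [pathSet, IsPath, Finset.mem_filter, Finset.mem_univ, true_and,
    Finset.mem_singleton]
  constructor
  · rintro ⟨h0, _⟩
    funext i
    exact h0 i (by omega)
  · rintro rfl
    exact ⟨fun i _ => rfl, fun i j hj => by have := j.2; have := i.2; omega⟩

lemma amp_snoc (a : V → V → ℂ) {n : ℕ} (ρ : Fin (n+1) → V) (y : V) :
    amp a (n+2) (Fin.snoc ρ y) = amp a (n+1) ρ * a (ρ (Fin.last n)) y := by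
  rw [amp_succ]
  have h1 : (fun k : Fin (n+1) => (Fin.snoc ρ y : Fin (n+2) → V) k.castSucc) = ρ := by
    funext k; exact snoc_castSucc' ρ y k
  rw [h1, snoc_mk_lt ρ y (by omega) (by omega), snoc_mk_last ρ y (by omega)]
  rfl

lemma sum_amp_pathSet (v₀ : V) (succ : V → Finset V) (a : V → V → ℂ)
    (ha : ∀ x : V, ∑ y ∈ succ x, a x y = 1) :
    ∀ n : ℕ, ∑ ω ∈ pathSet v₀ succ n, amp a n ω = 1 := by
  intro n
  induction n with
  | zero =>
      have hps : pathSet v₀ succ 0 = Finset.univ := by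
        ext ω
        simp only [pathSet, Finset.mem_filter, Finset.mem_univ, true_and, iff_true, IsPath]
        exact ⟨fun i => i.elim0, fun i => i.elim0⟩
      rw [hps, Finset.univ_unique, Finset.sum_singleton]
      simp [amp]
  | succ n ih =>
      rcases n with _ | m
      · rw [pathSet_one, Finset.sum_singleton]
        simp [amp]
      · have key : ∑ ω ∈ pathSet v₀ succ (m+2), amp a (m+2) ω
            = ∑ p ∈ (pathSet v₀ succ (m+1)).sigma
                (fun ρ => succ (ρ (Fin.last m))),
                amp a (m+1) p.1 * a (p.1 (Fin.last m)) p.2 := by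
          refine Finset.sum_nbij'
            (i := fun (ω : Fin (m+2) → V) =>
              (⟨fun k : Fin (m+1) => ω k.castSucc, ω (Fin.last (m+1))⟩ :
                (_ : Fin (m+1) → V) × V))
            (j := fun p => Fin.snoc p.1 p.2) ?_ ?_ ?_ ?_ ?_
          · intro ω hω
            simp only [pathSet, Finset.mem_filter, Finset.mem_univ, true_and] at hω
            obtain ⟨h0, hs⟩ := hω
            simp only [Finset.mem_sigma, pathSet, Finset.mem_filter, Finset.mem_univ, true_and]
            refine ⟨⟨fun i hi => h0 i.castSucc (by simpa using hi),
                fun i j hj => hs i.castSucc j.castSucc (by simpa using hj)⟩, ?_⟩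
            exact hs (Fin.last m).castSucc (Fin.last (m+1)) (by simp)
          · rintro ⟨ρ, y⟩ hp
            simp only [Finset.mem_sigma, pathSet, Finset.mem_filter, Finset.mem_univ,
              true_and] at hp
            obtain ⟨⟨h0, hs⟩, hy⟩ := hp
            simp only [pathSet, Finset.mem_filter, Finset.mem_univ, true_and]
            constructor
            · rintro ⟨iv, hivlt⟩ hi
              simp only at hi
              subst hi
              rw [snoc_mk_lt ρ y (by omega)]
              exact h0 _ rfl
            · rintro ⟨iv, hivlt⟩ ⟨jv, hjvlt⟩ hj
              simp only at hj
              subst hj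
              rcases Nat.lt_or_ge (iv + 1) (m+1) with hlt | hge
              · rw [snoc_mk_lt ρ y (show iv + 1 < m+1 from hlt), snoc_mk_lt ρ y (by omega)]
                exact hs _ _ rfl
              · have hiv : iv = m := by omega
                subst hiv
                rw [snoc_mk_last ρ y (by omega), snoc_mk_lt ρ y (by omega)]
                exact hy
          · intro ω hω
            simp only
            funext i
            refine Fin.lastCases ?_ (fun k => ?_) i
            · rw [snoc_last']
            · rw [snoc_castSucc']
          · rintro ⟨ρ, y⟩ hp
            simp only
            have h1 : (fun k : Fin (m+1) => (Fin.snoc ρ y : Fin (m+2) → V) k.castSucc) = ρ := by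
              funext k; exact snoc_castSucc' ρ y k
            rw [h1, snoc_last']
          · intro ω hω
            simp only
            rw [amp_succ]
            rfl
        rw [key, Finset.sum_sigma]
        calc ∑ ρ ∈ pathSet v₀ succ (m+1), ∑ y ∈ succ (ρ (Fin.last m)),
              amp a (m+1) ρ * a (ρ (Fin.last m)) y
            = ∑ ρ ∈ pathSet v₀ succ (m+1), amp a (m+1) ρ := by
              refine Finset.sum_congr rfl fun ρ _ => ?_
              rw [← Finset.mul_sum, ha, mul_one]
          _ = 1 := ih

lemma restrict_mem_pathSet {v₀ : V} {succ : V → Finset V} {ω : ℕ → V}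
    (hω : IsInfPath v₀ succ ω) (n : ℕ) :
    (fun i : Fin n => ω i) ∈ pathSet v₀ succ n := by
  simp only [pathSet, Finset.mem_filter, Finset.mem_univ, true_and, IsPath]
  exact ⟨fun i hi => by change ω (i:ℕ) = v₀ at *; rw [hi]; exact hω.1,
    fun i j hj => by change ω (j:ℕ) ∈ succ (ω (i:ℕ)); rw [hj]; exact hω.2 i⟩

/-- If the amplitudes along an infinite path `ω` satisfy
`|a (ω k) (ω (k+1))| ≤ m k / √2` with `m k ≥ 1` and `m k = 1` for all but
finitely many `k` (as for the complex percolation process with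
`r = 1/2 + i/2`), then `a_n(ω|_n) → 0`; consequently `{ω}` is beneficial with
`μ({ω}) = lim μ_n({ω|_n}) = 0`, and `lim μ_n(Ω_n \ {ω|_n}) = 1`. -/
theorem stmt16 (v₀ : V) (succ : V → Finset V) (a : V → V → ℂ)
    (ha : ∀ x : V, ∑ y ∈ succ x, a x y = 1)
    (ω : ℕ → V) (hω : IsInfPath v₀ succ ω)
    (m : ℕ → ℝ) (hm1 : ∀ k, 1 ≤ m k) (hmfin : {k : ℕ | m k ≠ 1}.Finite)
    (hbound : ∀ k : ℕ, ‖a (ω k) (ω (k + 1))‖ ≤ m k / Real.sqrt 2) :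
    Filter.Tendsto (fun n : ℕ => amp a n (fun i : Fin n => ω i))
      Filter.atTop (nhds 0) ∧
    Filter.Tendsto (fun n : ℕ => qMeas a n {fun i : Fin n => ω i})
      Filter.atTop (nhds 0) ∧
    Filter.Tendsto (fun n : ℕ =>
        qMeas a n ((pathSet v₀ succ n).erase (fun i : Fin n => ω i)))
      Filter.atTop (nhds 1) := by
  have hs2 : (1:ℝ) < Real.sqrt 2 := by
    rw [show (1:ℝ) = Real.sqrt 1 by simp]
    exact Real.sqrt_lt_sqrt (by norm_num) (by norm_num)
  have hs2pos : (0:ℝ) < Real.sqrt 2 := by linarith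
  obtain ⟨N, hN⟩ := hmfin.bddAbove
  have hmN : ∀ k, N < k → m k = 1 := by
    intro k hk
    by_contra h
    exact absurd (hN h) (by omega)
  set M := ∏ k ∈ Finset.range (N+1), m k with hM
  have hM0 : 0 ≤ M := Finset.prod_nonneg fun k _ => by linarith [hm1 k]
  -- the norm bound
  have habs : ∀ n : ℕ, N + 2 ≤ n →
      ‖amp a n (fun i : Fin n => ω i)‖ ≤ M * ((Real.sqrt 2)⁻¹) ^ (n-1) := by
    intro n hn
    have heq : ‖amp a n (fun i : Fin n => ω i)‖
        = ∏ k ∈ Finset.range (n-1), ‖a (ω k) (ω (k+1))‖ := by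
      rw [amp, norm_prod]
      exact Fin.prod_univ_eq_prod_range (fun k => ‖a (ω k) (ω (k+1))‖) (n-1)
    rw [heq]
    have hle : ∏ k ∈ Finset.range (n-1), ‖a (ω k) (ω (k+1))‖
        ≤ ∏ k ∈ Finset.range (n-1), (m k * (Real.sqrt 2)⁻¹) := by
      refine Finset.prod_le_prod (fun k _ => norm_nonneg _) (fun k _ => ?_)
      have := hbound k
      rwa [div_eq_mul_inv] at this
    refine hle.trans ?_
    rw [Finset.prod_mul_distrib, Finset.prod_const]
    have hprod : ∏ k ∈ Finset.range (n-1), m k = M := by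
      rw [hM]
      symm
      refine Finset.prod_subset (Finset.range_subset_range.mpr (by omega)) ?_
      intro k hk hk'
      simp only [Finset.mem_range] at hk hk'
      exact hmN k (by omega)
    rw [Finset.card_range, hprod]
  have hg : Filter.Tendsto (fun n : ℕ => M * ((Real.sqrt 2)⁻¹) ^ (n-1))
      Filter.atTop (nhds 0) := by
    have h1 : Filter.Tendsto (fun n : ℕ => ((Real.sqrt 2)⁻¹) ^ n)
        Filter.atTop (nhds 0) :=
      tendsto_pow_atTop_nhds_zero_of_lt_one (by positivity) (inv_lt_one_of_one_lt₀ hs2)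
    have h2 : Filter.Tendsto (fun n : ℕ => n - 1) Filter.atTop Filter.atTop :=
      Filter.tendsto_sub_atTop_nat 1
    have := (h1.comp h2).const_mul M
    simpa using this
  have part1 : Filter.Tendsto (fun n : ℕ => amp a n (fun i : Fin n => ω i))
      Filter.atTop (nhds 0) := by
    refine squeeze_zero_norm' ?_ hg
    filter_upwards [Filter.eventually_ge_atTop (N+2)] with n hn
    simpa using habs n hn
  have hnormSq : Continuous Complex.normSq := Complex.continuous_normSq
  have part2 : Filter.Tendsto (fun n : ℕ => qMeas a n {fun i : Fin n => ω i})
      Filter.atTop (nhds 0) := by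
    have := (hnormSq.tendsto 0).comp part1
    simp only [Complex.normSq_zero] at this
    convert this using 2 with n
    simp [qMeas, Function.comp]
  refine ⟨part1, part2, ?_⟩
  have hsum := sum_amp_pathSet v₀ succ a ha
  have herase : ∀ n : ℕ,
      ∑ ρ ∈ (pathSet v₀ succ n).erase (fun i : Fin n => ω i), amp a n ρ
        = 1 - amp a n (fun i : Fin n => ω i) := by
    intro n
    have h := Finset.add_sum_erase _ (amp a n) (restrict_mem_pathSet hω n)
    rw [hsum n] at h
    linear_combination h - (amp a n fun i : Fin n => ω ↑i)
  have hlim : Filter.Tendsto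
      (fun n : ℕ => (1 : ℂ) - amp a n (fun i : Fin n => ω i))
      Filter.atTop (nhds 1) := by
    have := part1.const_sub (1:ℂ)
    simpa using this
  have := (hnormSq.tendsto 1).comp hlim
  simp only [Complex.normSq_one] at this
  convert this using 2 with n
  simp only [qMeas, Function.comp, herase n]
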